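/- Let n > 1 and λ2, λ3, k > 0 with λ2 * (n-1)^((n-1)/n) > n * k * λ3, and let Tb_u < Tb_s be the two positive steady states of x' = f(x) with f(x) = λ2 x^n/(λ3^n + x^n) - k x. If x is a global solution with x(0) ∈ (Tb_u, Tb_s), then x is strictly increasing and x(t) → Tb_s as t → ∞; if x(0) ∈ (0, Tb_u), then x is strictly decreasing and x(t) → 0 as t → ∞. -/

import Mathlib

open Real Set Filter

lemma aux_main (f : ℝ → ℝ) (a b : ℝ) (hab : a < b)
    (hfa : f a = 0) (hfb : f b = 0)
    (hpos : ∀ z, a < z → z < b → 0 < f z)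
    (hcont : ∀ z, a < z → z < b → ContinuousAt f z)
    (L : ℝ) (hL : ∀ z, a ≤ z → z ≤ b → f z ≤ L * (b - z))
    (hM : ∀ z, a ≤ z → z ≤ b → f z ≤ L * (z - a))
    (x : ℝ → ℝ) (hx : ∀ t, HasDerivAt x (f (x t)) t)
    (hx0a : a < x 0) (hx0b : x 0 < b) :
    StrictMono x ∧ Tendsto x atTop (nhds b) := by
  have hdx : Differentiable ℝ x := fun t => (hx t).differentiableAt
  have hcx : Continuous x := hdx.continuous
  have hfz : ∀ z, a ≤ z → z ≤ b → 0 ≤ f z := by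
    intro z h1 h2
    rcases eq_or_lt_of_le h1 with rfl | h1
    · exact le_of_eq hfa.symm
    rcases eq_or_lt_of_le h2 with rfl | h2
    · exact le_of_eq hfb.symm
    exact (hpos z h1 h2).le
  have inv : ∀ t, a < x t ∧ x t < b := by
    by_contra hcon
    push_neg at hcon
    obtain ⟨t0, ht0'⟩ := hcon
    have ht0 : x t0 ∉ Ioo a b := fun hm => absurd (ht0' hm.1) (not_le.mpr hm.2)
    rcases le_total 0 t0 with ht0pos | ht0neg
    · -- forward blow-up time
      set B : Set ℝ := Ici (0:ℝ) ∩ x ⁻¹' (Ioo a b)ᶜ with hB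
      have hBne : B.Nonempty := ⟨t0, ht0pos, ht0⟩
      have hBbdd : BddBelow B := ⟨0, fun t ht => ht.1⟩
      have hBclosed : IsClosed B :=
        isClosed_Ici.inter ((isOpen_Ioo.preimage hcx).isClosed_compl)
      set t1 := sInf B with ht1def
      have ht1 : t1 ∈ B := hBclosed.csInf_mem hBne hBbdd
      have ht1x : x t1 ∉ Ioo a b := ht1.2
      have ht1nonneg : (0:ℝ) ≤ t1 := ht1.1
      have ht1pos : 0 < t1 := by
        rcases eq_or_lt_of_le ht1nonneg with h | h
        · exact absurd ⟨h ▸ hx0a, h ▸ hx0b⟩ ht1x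
        · exact h
      have hbefore : ∀ s, 0 ≤ s → s < t1 → x s ∈ Ioo a b := by
        intro s hs0 hst
        by_contra hmem
        exact absurd (csInf_le hBbdd ⟨hs0, hmem⟩) (not_le.mpr hst)
      have hxt1 : x t1 ∈ Icc a b := by
        have htend : Tendsto x (nhdsWithin t1 (Iio t1)) (nhds (x t1)) :=
          (hcx.tendsto t1).mono_left nhdsWithin_le_nhds
        refine isClosed_Icc.mem_of_tendsto htend ?_
        filter_upwards [Ioo_mem_nhdsLT_of_mem ⟨ht1pos, le_refl t1⟩] with s hs
        exact Ioo_subset_Icc_self (hbefore s hs.1.le hs.2)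
      have hIcc : ∀ s, 0 ≤ s → s ≤ t1 → a ≤ x s ∧ x s ≤ b := by
        intro s hs0 hst
        rcases eq_or_lt_of_le hst with rfl | h
        · exact ⟨hxt1.1, hxt1.2⟩
        · exact ⟨(hbefore s hs0 h).1.le, (hbefore s hs0 h).2.le⟩
      have hmono1 : MonotoneOn x (Icc 0 t1) := by
        refine monotoneOn_of_deriv_nonneg (convex_Icc _ _) hcx.continuousOn
          hdx.differentiableOn ?_
        intro s hs
        rw [interior_Icc] at hs
        rw [(hx s).deriv]
        exact hfz _ (hIcc s hs.1.le hs.2.le).1 (hIcc s hs.1.le hs.2.le).2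
      have hxt1b : x t1 = b := by
        have h1 : x 0 ≤ x t1 :=
          hmono1 ⟨le_refl 0, ht1nonneg⟩ ⟨ht1nonneg, le_refl t1⟩ ht1nonneg
        have h2 : a < x t1 := lt_of_lt_of_le hx0a h1
        rcases eq_or_lt_of_le hxt1.2 with h | h
        · exact h
        · exact absurd ⟨h2, h⟩ ht1x
      -- Gronwall-type contradiction
      set g : ℝ → ℝ := fun s => (b - x s) * Real.exp (L * s) with hgdef
      have hg : ∀ s, HasDerivAt g
          (-(f (x s)) * Real.exp (L * s) + (b - x s) * (Real.exp (L * s) * L)) s := by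
        intro s
        have h1 : HasDerivAt (fun s => b - x s) (-(f (x s))) s := (hx s).const_sub b
        have h2 : HasDerivAt (fun s : ℝ => Real.exp (L * s)) (Real.exp (L * s) * L) s := by
          simpa [Function.comp_def] using (Real.hasDerivAt_exp (L * s)).comp s ((hasDerivAt_id s).const_mul L)
        exact h1.mul h2
      have hgmono : MonotoneOn g (Icc 0 t1) := by
        refine monotoneOn_of_deriv_nonneg (convex_Icc _ _) ?_ ?_ ?_
        · exact (Continuous.mul (continuous_const.sub hcx)
            (Real.continuous_exp.comp (continuous_const.mul continuous_id))).continuousOn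
        · exact fun s _ => ((hg s).differentiableAt).differentiableWithinAt
        · intro s hs
          rw [interior_Icc] at hs
          rw [(hg s).deriv]
          have hxs := hIcc s hs.1.le hs.2.le
          have hLs := hL (x s) hxs.1 hxs.2
          have hE := Real.exp_pos (L * s)
          nlinarith [mul_nonneg (sub_nonneg.mpr hLs) hE.le]
      have h1 : g 0 ≤ g t1 :=
        hgmono ⟨le_refl 0, ht1nonneg⟩ ⟨ht1nonneg, le_refl t1⟩ ht1nonneg
      have h2 : g t1 = 0 := by simp [hgdef, hxt1b]
      have h3 : 0 < g 0 := by
        have : g 0 = (b - x 0) * Real.exp 0 := by simp [hgdef]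
        rw [this, Real.exp_zero, mul_one]
        linarith
      linarith
    · -- backward blow-up time
      set B : Set ℝ := Iic (0:ℝ) ∩ x ⁻¹' (Ioo a b)ᶜ with hB
      have hBne : B.Nonempty := ⟨t0, ht0neg, ht0⟩
      have hBbdd : BddAbove B := ⟨0, fun t ht => ht.1⟩
      have hBclosed : IsClosed B :=
        isClosed_Iic.inter ((isOpen_Ioo.preimage hcx).isClosed_compl)
      set t1 := sSup B with ht1def
      have ht1 : t1 ∈ B := hBclosed.csSup_mem hBne hBbdd
      have ht1x : x t1 ∉ Ioo a b := ht1.2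
      have ht1nonpos : t1 ≤ (0:ℝ) := ht1.1
      have ht1neg : t1 < 0 := by
        rcases eq_or_lt_of_le ht1nonpos with h | h
        · exact absurd ⟨h ▸ hx0a, h ▸ hx0b⟩ ht1x
        · exact h
      have hafter : ∀ s, t1 < s → s ≤ 0 → x s ∈ Ioo a b := by
        intro s hst hs0
        by_contra hmem
        exact absurd (le_csSup hBbdd ⟨hs0, hmem⟩) (not_le.mpr hst)
      have hxt1 : x t1 ∈ Icc a b := by
        have htend : Tendsto x (nhdsWithin t1 (Ioi t1)) (nhds (x t1)) :=
          (hcx.tendsto t1).mono_left nhdsWithin_le_nhds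
        refine isClosed_Icc.mem_of_tendsto htend ?_
        filter_upwards [Ioo_mem_nhdsGT_of_mem ⟨le_refl t1, ht1neg⟩] with s hs
        exact Ioo_subset_Icc_self (hafter s hs.1 hs.2.le)
      have hIcc : ∀ s, t1 ≤ s → s ≤ 0 → a ≤ x s ∧ x s ≤ b := by
        intro s hs1 hs0
        rcases eq_or_lt_of_le hs1 with rfl | h
        · exact ⟨hxt1.1, hxt1.2⟩
        · exact ⟨(hafter s h hs0).1.le, (hafter s h hs0).2.le⟩
      have hmono1 : MonotoneOn x (Icc t1 0) := by
        refine monotoneOn_of_deriv_nonneg (convex_Icc _ _) hcx.continuousOn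
          hdx.differentiableOn ?_
        intro s hs
        rw [interior_Icc] at hs
        rw [(hx s).deriv]
        exact hfz _ (hIcc s hs.1.le hs.2.le).1 (hIcc s hs.1.le hs.2.le).2
      have hxt1a : x t1 = a := by
        have h1 : x t1 ≤ x 0 :=
          hmono1 ⟨le_refl t1, ht1nonpos⟩ ⟨ht1nonpos, le_refl 0⟩ ht1nonpos
        have h2 : x t1 < b := lt_of_le_of_lt h1 hx0b
        rcases eq_or_lt_of_le hxt1.1 with h | h
        · exact h.symm
        · exact absurd ⟨h, h2⟩ ht1x
      set g : ℝ → ℝ := fun s => (x s - a) * Real.exp (-(L * s)) with hgdef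
      have hg : ∀ s, HasDerivAt g
          (f (x s) * Real.exp (-(L * s)) + (x s - a) * (Real.exp (-(L * s)) * -L)) s := by
        intro s
        have h1 : HasDerivAt (fun s => x s - a) (f (x s)) s := (hx s).sub_const a
        have h2 : HasDerivAt (fun s : ℝ => Real.exp (-(L * s))) (Real.exp (-(L * s)) * -L) s := by
          simpa [Function.comp_def] using (Real.hasDerivAt_exp (-(L * s))).comp s
            (((hasDerivAt_id s).const_mul L).neg)
        exact h1.mul h2
      have hganti : AntitoneOn g (Icc t1 0) := by
        refine antitoneOn_of_deriv_nonpos (convex_Icc _ _) ?_ ?_ ?_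
        · exact (Continuous.mul (hcx.sub continuous_const)
            (Real.continuous_exp.comp (continuous_const.mul continuous_id).neg)).continuousOn
        · exact fun s _ => ((hg s).differentiableAt).differentiableWithinAt
        · intro s hs
          rw [interior_Icc] at hs
          rw [(hg s).deriv]
          have hxs := hIcc s hs.1.le hs.2.le
          have hMs := hM (x s) hxs.1 hxs.2
          have hE := Real.exp_pos (-(L * s))
          nlinarith [mul_nonneg (sub_nonneg.mpr hMs) hE.le]
      have h1 : g 0 ≤ g t1 :=
        hganti ⟨le_refl t1, ht1nonpos⟩ ⟨ht1nonpos, le_refl 0⟩ ht1nonpos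
      have h2 : g t1 = 0 := by simp [hgdef, hxt1a]
      have h3 : 0 < g 0 := by
        have : g 0 = (x 0 - a) * Real.exp (-(L * 0)) := rfl
        rw [this]
        have : Real.exp (-(L * 0)) = 1 := by simp
        rw [this, mul_one]
        linarith
      linarith
  have hmono : StrictMono x := by
    refine strictMono_of_deriv_pos ?_
    intro t
    rw [(hx t).deriv]
    exact hpos _ (inv t).1 (inv t).2
  refine ⟨hmono, ?_⟩
  have hbdd : BddAbove (range x) := ⟨b, by rintro _ ⟨t, rfl⟩; exact (inv t).2.le⟩
  have htend : Tendsto x atTop (nhds (⨆ t, x t)) :=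
    tendsto_atTop_ciSup hmono.monotone hbdd
  set l := ⨆ t, x t with hldef
  have hxle : ∀ t, x t ≤ l := fun t => le_ciSup hbdd t
  have hlb : l ≤ b := ciSup_le fun t => (inv t).2.le
  have hal : a < l := lt_of_lt_of_le hx0a (hxle 0)
  rcases eq_or_lt_of_le hlb with h | hlt
  · rw [← h]; exact htend
  exfalso
  have hfl : 0 < f l := hpos l hal hlt
  have hc : Tendsto (fun t => f (x t)) atTop (nhds (f l)) :=
    (hcont l hal hlt).tendsto.comp htend
  have hev : ∀ᶠ t in atTop, f l / 2 < f (x t) :=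
    hc.eventually (eventually_gt_nhds (by linarith))
  obtain ⟨T, hT⟩ := eventually_atTop.mp hev
  set c := f l / 2 with hcdef
  have hc0 : 0 < c := half_pos hfl
  have hgrow : ∀ t, T ≤ t → x T + c * (t - T) ≤ x t := by
    intro t hTt
    have hd : ∀ s, HasDerivAt (fun s => x s - c * s) (f (x s) - c * 1) s :=
      fun s => (hx s).sub ((hasDerivAt_id s).const_mul c)
    have hm : MonotoneOn (fun s => x s - c * s) (Icc T t) := by
      refine monotoneOn_of_deriv_nonneg (convex_Icc _ _)
        (hcx.sub (continuous_const.mul continuous_id)).continuousOn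
        (fun s _ => ((hd s).differentiableAt).differentiableWithinAt) ?_
      intro s hs
      rw [interior_Icc] at hs
      rw [(hd s).deriv]
      have := hT s hs.1.le
      linarith
    have := hm ⟨le_refl T, hTt⟩ ⟨hTt, le_refl t⟩ hTt
    simp only [] at this
    linarith [this]
  set t2 := T + (l - x T) / c + 1 with ht2def
  have hTt2 : T ≤ t2 := by
    have h0 : 0 ≤ (l - x T) / c := div_nonneg (sub_nonneg.mpr (hxle T)) hc0.le
    rw [ht2def]
    linarith
  have h1 := hgrow t2 hTt2
  have h2 : c * (t2 - T) = (l - x T) + c := by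
    rw [ht2def, mul_sub, mul_add, mul_add, mul_div_cancel₀ _ hc0.ne']
    ring
  have := hxle t2
  rw [h2] at h1
  linarith

set_option maxHeartbeats 1000000 in
theorem stmt_7 (n lam2 lam3 k : ℝ) (hn : 1 < n) (h2 : 0 < lam2) (h3 : 0 < lam3)
    (hk : 0 < k)
    (f : ℝ → ℝ) (hf : ∀ x, f x = lam2 * x ^ n / (lam3 ^ n + x ^ n) - k * x)
    (hcond : lam2 * (n - 1) ^ ((n - 1) / n) > n * k * lam3)
    (Tbu Tbs : ℝ) (hu : 0 < Tbu) (hus : Tbu < Tbs)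
    (hfu : f Tbu = 0) (hfs : f Tbs = 0)
    (honly : ∀ y, 0 < y → f y = 0 → y = Tbu ∨ y = Tbs)
    (x : ℝ → ℝ) (hx : ∀ t, HasDerivAt x (f (x t)) t) :
    (x 0 ∈ Ioo Tbu Tbs → StrictMono x ∧ Tendsto x atTop (nhds Tbs)) ∧
      (x 0 ∈ Ioo 0 Tbu → StrictAnti x ∧ Tendsto x atTop (nhds 0)) := by
  have hn0 : (0:ℝ) < n := by linarith
  have hn1 : (0:ℝ) < n - 1 := by linarith
  have hfeq : f = fun z => lam2 * z ^ n / (lam3 ^ n + z ^ n) - k * z := funext hf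
  have hl3 : 0 < lam3 ^ n := Real.rpow_pos_of_pos h3 n
  have hden : ∀ z : ℝ, 0 ≤ z → 0 < lam3 ^ n + z ^ n := fun z hz =>
    add_pos_of_pos_of_nonneg hl3 (Real.rpow_nonneg hz n)
  have hf0 : f 0 = 0 := by
    rw [hf, Real.zero_rpow hn0.ne']
    simp
  have hcontf : ∀ z : ℝ, 0 < z → ContinuousAt f z := by
    intro z hz
    have h1 : ContinuousAt (fun w : ℝ => w ^ n) z :=
      Real.continuousAt_rpow_const z n (Or.inl hz.ne')
    have h5 : ContinuousAt (fun w => lam2 * w ^ n / (lam3 ^ n + w ^ n) - k * w) z :=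
      ((continuousAt_const.mul h1).div (continuousAt_const.add h1)
        (hden z hz.le).ne').sub (continuousAt_const.mul continuousAt_id)
    rw [hfeq]
    exact h5
  have hcontOn : ∀ p q : ℝ, 0 < p → ContinuousOn f (Icc p q) := fun p q hp w hw =>
    (hcontf w (lt_of_lt_of_le hp hw.1)).continuousWithinAt
  -- Lipschitz bound on [0, Tbs]
  obtain ⟨C, hCdef⟩ : ∃ c : ℝ, c = lam2 * n * Tbs ^ (n - 1) / lam3 ^ n + k := ⟨_, rfl⟩
  have hTbs0 : (0:ℝ) < Tbs := lt_trans hu hus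
  have hlip : ∀ p ∈ Icc (0:ℝ) Tbs, ∀ q ∈ Icc (0:ℝ) Tbs, |f p - f q| ≤ C * |p - q| := by
    have hders : ∀ z ∈ Icc (0:ℝ) Tbs, HasDerivWithinAt f
        ((fun z : ℝ => (lam2 * (n * z ^ (n - 1)) * (lam3 ^ n + z ^ n) -
          lam2 * z ^ n * (n * z ^ (n - 1))) / (lam3 ^ n + z ^ n) ^ 2 - k * 1) z)
        (Icc (0:ℝ) Tbs) z := by
      intro z hz
      have h1 : HasDerivAt (fun w : ℝ => w ^ n) (n * z ^ (n - 1)) z :=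
        Real.hasDerivAt_rpow_const (Or.inr hn.le)
      have h2 : HasDerivAt (fun w : ℝ => lam2 * w ^ n) (lam2 * (n * z ^ (n - 1))) z :=
        h1.const_mul lam2
      have h3' : HasDerivAt (fun w : ℝ => lam3 ^ n + w ^ n) (n * z ^ (n - 1)) z :=
        h1.const_add (lam3 ^ n)
      have h4 := h2.div h3' (hden z hz.1).ne'
      have h5 := h4.sub ((hasDerivAt_id z).const_mul k)
      rw [hfeq]
      exact h5.hasDerivWithinAt
    have hbound : ∀ z ∈ Icc (0:ℝ) Tbs,
        ‖(fun z : ℝ => (lam2 * (n * z ^ (n - 1)) * (lam3 ^ n + z ^ n) -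
          lam2 * z ^ n * (n * z ^ (n - 1))) / (lam3 ^ n + z ^ n) ^ 2 - k * 1) z‖ ≤ C := by
      intro z hz
      simp only [Real.norm_eq_abs, mul_one]
      have hZ1 : 0 ≤ z ^ (n - 1) := Real.rpow_nonneg hz.1 _
      have hZ1le : z ^ (n - 1) ≤ Tbs ^ (n - 1) := Real.rpow_le_rpow hz.1 hz.2 hn1.le
      have hZn : 0 ≤ z ^ n := Real.rpow_nonneg hz.1 n
      have hvpos := hden z hz.1
      have hnum : lam2 * (n * z ^ (n - 1)) * (lam3 ^ n + z ^ n) -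
          lam2 * z ^ n * (n * z ^ (n - 1)) = lam2 * (n * z ^ (n - 1)) * lam3 ^ n := by ring
      rw [hnum, abs_le, hCdef]
      have hfrac_nonneg : 0 ≤ lam2 * (n * z ^ (n - 1)) * lam3 ^ n / (lam3 ^ n + z ^ n) ^ 2 := by
        positivity
      have hfrac_le : lam2 * (n * z ^ (n - 1)) * lam3 ^ n / (lam3 ^ n + z ^ n) ^ 2
          ≤ lam2 * n * Tbs ^ (n - 1) / lam3 ^ n := by
        rw [div_le_div_iff₀ (by positivity) hl3]
        have e1 : (lam3 ^ n) ^ 2 ≤ (lam3 ^ n + z ^ n) ^ 2 := by nlinarith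
        have e2 : lam2 * (n * z ^ (n - 1)) ≤ lam2 * (n * Tbs ^ (n - 1)) := by
          nlinarith [mul_le_mul_of_nonneg_left hZ1le (show (0:ℝ) ≤ lam2 * n by positivity)]
        nlinarith [mul_le_mul e2 e1 (by positivity) (by positivity)]
      have hTb1 : 0 ≤ Tbs ^ (n - 1) := Real.rpow_nonneg hTbs0.le _
      constructor
      · have : 0 ≤ lam2 * n * Tbs ^ (n - 1) / lam3 ^ n := by positivity
        nlinarith [hfrac_nonneg]
      · nlinarith [hfrac_le]
    intro p hp q hq
    have := Convex.norm_image_sub_le_of_norm_hasDerivWithin_le hders hbound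
      (convex_Icc _ _) hq hp
    simpa [Real.norm_eq_abs] using this
  -- small-z negativity
  have hz0 : ∃ z0 : ℝ, 0 < z0 ∧ z0 < Tbu ∧ f z0 < 0 := by
    have ht : Tendsto (fun z : ℝ => lam2 * z ^ (n - 1)) (nhds 0) (nhds 0) := by
      have h1 : ContinuousAt (fun z : ℝ => z ^ (n - 1)) 0 :=
        Real.continuousAt_rpow_const 0 (n - 1) (Or.inr hn1.le)
      have h2 := h1.tendsto
      rw [Real.zero_rpow hn1.ne'] at h2
      simpa using h2.const_mul lam2
    have hev : ∀ᶠ z in nhds (0:ℝ), lam2 * z ^ (n - 1) < k * lam3 ^ n :=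
      ht.eventually (eventually_lt_nhds (by positivity))
    have hev2 : ∀ᶠ z in nhdsWithin (0:ℝ) (Ioi 0), lam2 * z ^ (n - 1) < k * lam3 ^ n :=
      hev.filter_mono nhdsWithin_le_nhds
    have hev3 : ∀ᶠ z in nhdsWithin (0:ℝ) (Ioi 0), z < Tbu :=
      (eventually_lt_nhds hu).filter_mono nhdsWithin_le_nhds
    have hev4 : ∀ᶠ z in nhdsWithin (0:ℝ) (Ioi 0), z ∈ Ioi (0:ℝ) :=
      eventually_mem_nhdsWithin
    obtain ⟨z0, ⟨hza, hzb⟩, hz3⟩ := ((hev2.and hev3).and hev4).exists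
    refine ⟨z0, hz3, hzb, ?_⟩
    have hz0pos : (0:ℝ) < z0 := hz3
    have hD := hden z0 hz0pos.le
    have hsplit : z0 ^ n = z0 ^ (n - 1) * z0 := by
      have h := Real.rpow_add hz0pos (n - 1) 1
      rw [Real.rpow_one, show n - 1 + 1 = n by ring] at h
      exact h
    rw [hf]
    have hnum_lt : lam2 * z0 ^ n < k * z0 * (lam3 ^ n + z0 ^ n) := by
      have hZn : 0 ≤ z0 ^ n := Real.rpow_nonneg hz0pos.le n
      have e1 : lam2 * z0 ^ n = lam2 * z0 ^ (n - 1) * z0 := by rw [hsplit]; ring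
      have e2 : lam2 * z0 ^ (n - 1) * z0 < k * lam3 ^ n * z0 :=
        mul_lt_mul_of_pos_right hza hz0pos
      have e3 : k * lam3 ^ n * z0 ≤ k * z0 * (lam3 ^ n + z0 ^ n) := by
        nlinarith [mul_nonneg (mul_nonneg hk.le hz0pos.le) hZn]
      linarith
    have : lam2 * z0 ^ n / (lam3 ^ n + z0 ^ n) < k * z0 := (div_lt_iff₀ hD).mpr hnum_lt
    linarith
  -- sign on (0, Tbu)
  have sign1 : ∀ z, 0 < z → z < Tbu → f z < 0 := by
    intro z hz1 hz2
    by_contra hge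
    push_neg at hge
    have hne : f z ≠ 0 := by
      intro h0
      rcases honly z hz1 h0 with rfl | rfl
      · exact lt_irrefl _ hz2
      · linarith
    have hfzpos : 0 < f z := lt_of_le_of_ne hge (Ne.symm hne)
    obtain ⟨z0, hz01, hz02, hz03⟩ := hz0
    rcases lt_trichotomy z z0 with hzz | hzz | hzz
    · obtain ⟨c, hc, hc0⟩ := intermediate_value_Icc' hzz.le (hcontOn z z0 hz1)
        ⟨hz03.le, hfzpos.le⟩
      rcases honly c (lt_of_lt_of_le hz1 hc.1) hc0 with rfl | rfl
      · linarith [hc.2]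
      · linarith [hc.2]
    · rw [hzz] at hfzpos; linarith
    · obtain ⟨c, hc, hc0⟩ := intermediate_value_Icc hzz.le (hcontOn z0 z hz01)
        ⟨hz03.le, hfzpos.le⟩
      rcases honly c (lt_of_lt_of_le hz01 hc.1) hc0 with rfl | rfl
      · linarith [hc.2]
      · linarith [hc.2]
  -- the positive point xs
  obtain ⟨xs, hxsdef⟩ : ∃ c : ℝ, c = lam3 * (n - 1) ^ (n⁻¹ : ℝ) := ⟨_, rfl⟩
  have hp : 0 < (n - 1) ^ (n⁻¹ : ℝ) := Real.rpow_pos_of_pos hn1 _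
  have hxs : 0 < xs := by rw [hxsdef]; exact mul_pos h3 hp
  have hxsn : xs ^ n = lam3 ^ n * (n - 1) := by
    rw [hxsdef, Real.mul_rpow h3.le (Real.rpow_nonneg hn1.le _),
      Real.rpow_inv_rpow hn1.le hn0.ne']
  have hkey : (n - 1) ^ ((n - 1) / n) * (n - 1) ^ (n⁻¹ : ℝ) = n - 1 := by
    have he : (n - 1) / n + n⁻¹ = 1 := by
      rw [inv_eq_one_div, ← add_div]
      rw [show n - 1 + 1 = n by ring, div_self hn0.ne']
    rw [← Real.rpow_add hn1, he, Real.rpow_one]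
  have hfxs : 0 < f xs := by
    rw [hf, hxsn]
    have hdpos : 0 < lam3 ^ n + lam3 ^ n * (n - 1) := by
      have := mul_pos hl3 hn1; linarith
    rw [sub_pos, lt_div_iff₀ hdpos]
    have h1 : n * k * lam3 * ((n - 1) ^ (n⁻¹ : ℝ) * lam3 ^ n) <
        lam2 * (n - 1) ^ ((n - 1) / n) * ((n - 1) ^ (n⁻¹ : ℝ) * lam3 ^ n) :=
      mul_lt_mul_of_pos_right hcond (by positivity)
    have h2 : lam2 * (lam3 ^ n * (n - 1)) =
        lam2 * (n - 1) ^ ((n - 1) / n) * ((n - 1) ^ (n⁻¹ : ℝ) * lam3 ^ n) := by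
      linear_combination (-(lam2 * lam3 ^ n)) * hkey
    have h3' : k * xs * (lam3 ^ n + lam3 ^ n * (n - 1)) =
        n * k * lam3 * ((n - 1) ^ (n⁻¹ : ℝ) * lam3 ^ n) := by
      rw [hxsdef]; ring
    rw [h3', h2]
    exact h1
  have hxs_u : Tbu < xs := by
    rcases lt_trichotomy xs Tbu with h | h | h
    · exact absurd (sign1 xs hxs h) (by linarith)
    · rw [h, hfu] at hfxs; exact absurd hfxs (lt_irrefl 0)
    · exact h
  have hxs_s : xs < Tbs := by
    by_contra hle
    push_neg at hle
    have hne : xs ≠ Tbs := fun h => by rw [h, hfs] at hfxs; exact lt_irrefl 0 hfxs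
    have hlt : Tbs < xs := lt_of_le_of_ne hle (Ne.symm hne)
    obtain ⟨z1, hz1def⟩ : ∃ c : ℝ, c = max xs (lam2 / k) + 1 := ⟨_, rfl⟩
    have hz1a : xs < z1 := by
      have := le_max_left xs (lam2 / k); rw [hz1def]; linarith
    have hz1pos : 0 < z1 := lt_trans hxs hz1a
    have hfz1 : f z1 < 0 := by
      rw [hf]
      have hD := hden z1 hz1pos.le
      have h1 : lam2 * z1 ^ n / (lam3 ^ n + z1 ^ n) ≤ lam2 := by
        rw [div_le_iff₀ hD]
        nlinarith [Real.rpow_nonneg hz1pos.le n]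
      have h2 : lam2 < k * z1 := by
        have ha := le_max_right xs (lam2 / k)
        have hb : lam2 / k < z1 := by rw [hz1def]; linarith
        calc lam2 = k * (lam2 / k) := by field_simp
        _ < k * z1 := by nlinarith
      linarith
    obtain ⟨c, hc, hc0⟩ := intermediate_value_Icc' hz1a.le (hcontOn xs z1 hxs)
      ⟨hfz1.le, hfxs.le⟩
    rcases honly c (lt_of_lt_of_le hxs hc.1) hc0 with rfl | rfl
    · linarith [hc.1]
    · linarith [hc.1]
  -- sign on (Tbu, Tbs)
  have sign2 : ∀ z, Tbu < z → z < Tbs → 0 < f z := by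
    intro z hz1 hz2
    by_contra hle
    push_neg at hle
    have hzpos : 0 < z := lt_trans hu hz1
    have hne : f z ≠ 0 := by
      intro h0
      rcases honly z hzpos h0 with rfl | rfl
      · exact lt_irrefl _ hz1
      · exact lt_irrefl _ hz2
    have hneg : f z < 0 := lt_of_le_of_ne hle hne
    rcases lt_trichotomy z xs with h | h | h
    · obtain ⟨c, hc, hc0⟩ := intermediate_value_Icc h.le (hcontOn z xs hzpos)
        ⟨hneg.le, hfxs.le⟩
      rcases honly c (lt_of_lt_of_le hzpos hc.1) hc0 with rfl | rfl
      · linarith [hc.1]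
      · linarith [hc.2]
    · rw [h] at hneg; linarith
    · obtain ⟨c, hc, hc0⟩ := intermediate_value_Icc' h.le (hcontOn xs z hxs)
        ⟨hneg.le, hfxs.le⟩
      rcases honly c (lt_of_lt_of_le hxs hc.1) hc0 with rfl | rfl
      · linarith [hc.1]
      · linarith [hc.2]
  -- linear bounds
  have hL1 : ∀ z, Tbu ≤ z → z ≤ Tbs → f z ≤ C * (Tbs - z) := by
    intro z h1 h2
    have := hlip z ⟨by linarith, h2⟩ Tbs ⟨hTbs0.le, le_refl _⟩
    rw [hfs, sub_zero, abs_of_nonpos (by linarith : z - Tbs ≤ 0)] at this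
    have habs : -(z - Tbs) = Tbs - z := by ring
    rw [habs] at this
    exact le_trans (le_abs_self _) this
  have hM1 : ∀ z, Tbu ≤ z → z ≤ Tbs → f z ≤ C * (z - Tbu) := by
    intro z h1 h2
    have := hlip z ⟨by linarith, h2⟩ Tbu ⟨hu.le, hus.le⟩
    rw [hfu, sub_zero, abs_of_nonneg (by linarith : (0:ℝ) ≤ z - Tbu)] at this
    exact le_trans (le_abs_self _) this
  have hL2 : ∀ z, -Tbu ≤ z → z ≤ 0 → -f (-z) ≤ C * (0 - z) := by
    intro z h1 h2
    have := hlip (-z) ⟨by linarith, by linarith⟩ 0 ⟨le_refl _, hTbs0.le⟩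
    rw [hf0, sub_zero, sub_zero, abs_of_nonneg (by linarith : (0:ℝ) ≤ -z)] at this
    have := le_trans (neg_le_abs _) this
    linarith
  have hM2 : ∀ z, -Tbu ≤ z → z ≤ 0 → -f (-z) ≤ C * (z - -Tbu) := by
    intro z h1 h2
    have := hlip (-z) ⟨by linarith, by linarith⟩ Tbu ⟨hu.le, hus.le⟩
    rw [hfu, sub_zero, abs_of_nonpos (by linarith : -z - Tbu ≤ 0)] at this
    have := le_trans (neg_le_abs _) this
    linarith
  constructor
  · intro hmem
    exact aux_main f Tbu Tbs hus hfu hfs sign2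
      (fun z hz1 _ => hcontf z (lt_trans hu hz1)) C hL1 hM1 x hx hmem.1 hmem.2
  · intro hmem
    have hga : (fun z => -f (-z)) (-Tbu) = 0 := by simp [hfu]
    have hgb : (fun z => -f (-z)) (0:ℝ) = 0 := by simp [hf0]
    have hgpos : ∀ z, -Tbu < z → z < 0 → 0 < (fun z => -f (-z)) z := by
      intro z hz1 hz2
      simp only [neg_pos]
      exact sign1 (-z) (by linarith) (by linarith)
    have hgcont : ∀ z, -Tbu < z → z < 0 → ContinuousAt (fun z => -f (-z)) z := by
      intro z hz1 hz2
      exact (ContinuousAt.comp (hcontf (-z) (by linarith))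
        continuous_neg.continuousAt).neg
    have hya : ∀ t, HasDerivAt (fun t => -x t) ((fun z => -f (-z)) ((fun t => -x t) t)) t := by
      intro t
      have := (hx t).neg
      simp only [neg_neg]
      exact this
    have h0a : -Tbu < (fun t => -x t) 0 := by
      simp only [neg_lt_neg_iff]
      exact hmem.2
    have h0b : (fun t => -x t) 0 < 0 := by
      simp only [Left.neg_neg_iff]
      exact hmem.1
    obtain ⟨hm, ht⟩ := aux_main (fun z => -f (-z)) (-Tbu) 0 (by linarith)
      hga hgb hgpos hgcont C hL2 hM2 (fun t => -x t) hya h0a h0b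
    constructor
    · intro s t hst
      have := hm hst
      simpa using this
    · have := ht.neg
      simpa using this
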